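/- Let T be a clique tree of a chordal graph G, let A = A_0, A_1, ..., A_{k-1}, A_0 be an Euler tour of T (viewed as a symmetric digraph), and let u be a vertex of G. If u ∈ A_i and u ∈ A_j, the circular segment A(i,j) (the cliques strictly between positions i and j in the tour) is nonempty, and u belongs to no clique occurring in A(i,j), then A_i = A_j. -/

import Mathlib

open SimpleGraph

variable {V : Type*}

/-- A graph is chordal if it has no induced cycle of length at least four. -/
def Chordal (G : SimpleGraph V) : Prop :=
  ∀ n : ℕ, 4 ≤ n → IsEmpty (SimpleGraph.cycleGraph n ↪g G)

/-- `C` is a maximal clique of `G`. -/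
def IsMaxClique (G : SimpleGraph V) (C : Set V) : Prop :=
  G.IsClique C ∧ ∀ D : Set V, G.IsClique D → C ⊆ D → D = C

/-- A clique tree of a chordal graph `G`: a tree on the maximal cliques of `G`
such that for every vertex `v` of `G` the maximal cliques containing `v` induce
a (connected) subtree. -/
def IsCliqueTree (G : SimpleGraph V) (T : SimpleGraph {C : Set V // IsMaxClique G C}) : Prop :=
  T.IsTree ∧ ∀ v : V, (T.induce {C : {C : Set V // IsMaxClique G C} | v ∈ (C : Set V)}).Connected

/-- A leaf of a tree: a vertex with exactly one neighbour. -/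
def IsTreeLeaf {α : Type*} (T : SimpleGraph α) (C : α) : Prop := ∃! C', T.Adj C C'

/-- An Euler tour `A_0, A_1, …, A_{k-1}, A_0` of the tree `T` viewed as a symmetric
digraph: a closed walk traversing each directed arc exactly once and visiting every
vertex.  (The degenerate disjunct permits the constant tour on a single-vertex tree.) -/
def IsEulerTour {α : Type*} (T : SimpleGraph α) (k : ℕ) (A : ZMod k → α) : Prop :=
  0 < k ∧ Function.Surjective A ∧
  (∀ i : ZMod k, T.Adj (A i) (A (i + 1)) ∨ (A i = A (i + 1) ∧ ∀ a b : α, ¬ T.Adj a b)) ∧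
  (∀ a b : α, T.Adj a b → ∃! i : ZMod k, A i = a ∧ A (i + 1) = b)

/-- The set of positions strictly between position `i` and position `j` in the cyclic
order on `ZMod k` (the positions of the circular subsequence `A(i,j)`). -/
def cyclicBetween (k : ℕ) (i j : ZMod k) : Set (ZMod k) :=
  {t : ZMod k | ∃ m : ℕ, 0 < m ∧ m < (j - i).val ∧ t = i + (m : ZMod k)}

/-- Auxiliary: a walk along consecutive values of `f`, with control of its edges. -/
lemma exists_seg_walk {α : Type*} (T : SimpleGraph α) (f : ℕ → α) :
    ∀ m : ℕ, (∀ n < m, T.Adj (f n) (f (n + 1))) →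
      ∃ W : T.Walk (f 0) (f m), ∀ e ∈ W.edges, ∃ n < m, e = s(f n, f (n + 1)) := by
  intro m
  induction m with
  | zero => exact fun _ => ⟨SimpleGraph.Walk.nil, by simp⟩
  | succ m ih =>
    intro h
    obtain ⟨W, hW⟩ := ih (fun n hn => h n (Nat.lt_succ_of_lt hn))
    refine ⟨W.concat (h m (Nat.lt_succ_self m)), ?_⟩
    intro e he
    rw [SimpleGraph.Walk.edges_concat, List.concat_eq_append, List.mem_append,
      List.mem_singleton] at he
    rcases he with he | he
    · obtain ⟨n, hn, hne⟩ := hW e he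
      exact ⟨n, Nat.lt_succ_of_lt hn, hne⟩
    · exact ⟨m, Nat.lt_succ_self m, by simpa using he⟩

/-- If `u ∈ A_i`, `u ∈ A_j`, the circular segment `A(i,j)` is nonempty
and `u` lies in no clique occurring there, then `A_i = A_j`. -/
theorem eulerTour_gap_endpoints_eq [Fintype V] (G : SimpleGraph V) (hG : Chordal G)
    (T : SimpleGraph {C : Set V // IsMaxClique G C}) (hT : IsCliqueTree G T)
    (k : ℕ) (A : ZMod k → {C : Set V // IsMaxClique G C}) (hA : IsEulerTour T k A)
    (u : V) (i j : ZMod k) (hi : u ∈ (A i : Set V)) (hj : u ∈ (A j : Set V))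
    (hne : (cyclicBetween k i j).Nonempty)
    (hno : ∀ t ∈ cyclicBetween k i j, u ∉ (A t : Set V)) : A i = A j := by
  classical
  obtain ⟨hk, hsurj, hstep, huniq⟩ := hA
  haveI : NeZero k := ⟨hk.ne'⟩
  by_cases hdeg : ∀ a b : {C : Set V // IsMaxClique G C}, ¬ T.Adj a b
  · -- degenerate case: `T` has no edges, so by connectedness it has one vertex
    by_contra hij
    obtain ⟨w⟩ := hT.1.isConnected.preconnected (A i) (A j)
    obtain ⟨X, hXadj, -, -⟩ :=
      SimpleGraph.Walk.not_nil_iff.mp (SimpleGraph.Walk.not_nil_of_ne hij (p := w))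
    exact hdeg _ _ hXadj
  · push_neg at hdeg
    have hadjall : ∀ t : ZMod k, T.Adj (A t) (A (t + 1)) := by
      intro t
      refine (hstep t).resolve_right ?_
      rintro ⟨-, hall⟩
      obtain ⟨a, b, hab⟩ := hdeg
      exact hall a b hab
    set L := (j - i).val with hLdef
    obtain ⟨t0, m1, hm1pos, hm1lt, -⟩ := hne
    have hL2 : 2 ≤ L := by omega
    set f : ℕ → {C : Set V // IsMaxClique G C} := fun n => A (i + (n : ZMod k)) with hf
    obtain ⟨W0, hWedges⟩ := exists_seg_walk T f L (fun n _ => by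
      have := hadjall (i + (n : ZMod k))
      simpa [hf, add_assoc] using this)
    have hf0 : f 0 = A i := by simp [hf]
    have hfL : f L = A j := by
      have : ((L : ℕ) : ZMod k) = j - i := by
        rw [hLdef]; exact ZMod.natCast_rightInverse (j - i)
      simp [hf, this]
    by_contra hij
    -- the walk from the induced subgraph on cliques containing `u`
    obtain ⟨w⟩ := (hT.2 u).preconnected
      ⟨A i, hi⟩ ⟨A j, hj⟩
    let emb : (T.induce {C : {C : Set V // IsMaxClique G C} | u ∈ (C : Set V)}) ↪g T :=
      SimpleGraph.Embedding.induce _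
    let w' : T.Walk (A i) (A j) := w.map emb.toHom
    have hsupp : ∀ X ∈ w'.support, u ∈ (X : Set V) := by
      intro X hX
      change X ∈ (w.map emb.toHom).support at hX
      rw [SimpleGraph.Walk.support_map] at hX
      obtain ⟨y, hy, rfl⟩ := List.mem_map.mp hX
      exact y.2
    let W : T.Walk (A i) (A j) := W0.copy hf0 hfL
    -- both bypasses are paths from `A i` to `A j`, hence equal
    have hpath_eq : W.bypass = w'.bypass := by
      have := hT.1.IsAcyclic.path_unique
        (⟨W.bypass, W.bypass_isPath⟩ : T.Path (A i) (A j)) ⟨w'.bypass, w'.bypass_isPath⟩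
      exact congrArg Subtype.val this
    have hnotnil : ¬ W.bypass.Nil := SimpleGraph.Walk.not_nil_of_ne hij
    obtain ⟨X, hXadj, p', hpeq⟩ := SimpleGraph.Walk.not_nil_iff.mp hnotnil
    have hXu : u ∈ (X : Set V) := by
      apply hsupp
      apply SimpleGraph.Walk.support_bypass_subset
      rw [← hpath_eq, hpeq]
      simp [SimpleGraph.Walk.support_cons]
    have hXedge : s(A i, X) ∈ W.edges := by
      apply SimpleGraph.Walk.edges_bypass_subset
      rw [hpeq]
      simp [SimpleGraph.Walk.edges_cons]
    have hXedge0 : s(A i, X) ∈ W0.edges := by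
      rw [show W0.edges = W.edges from (SimpleGraph.Walk.edges_copy W0 hf0 hfL).symm]
      exact hXedge
    obtain ⟨n, hn, hne'⟩ := hWedges _ hXedge0
    have hun : u ∈ (f n : Set V) ∧ u ∈ (f (n + 1) : Set V) := by
      rcases Sym2.eq_iff.mp hne'.symm with ⟨h1, h2⟩ | ⟨h1, h2⟩
      · rw [h1, h2]; exact ⟨hi, hXu⟩
      · rw [h1, h2]; exact ⟨hXu, hi⟩
    obtain ⟨m0, hm0pos, hm0lt, humem⟩ :
        ∃ m0 : ℕ, 0 < m0 ∧ m0 < L ∧ u ∈ (A (i + (m0 : ZMod k)) : Set V) := by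
      by_cases h : n = 0
      · exact ⟨1, one_pos, by omega, by simpa [hf, h] using hun.2⟩
      · exact ⟨n, Nat.pos_of_ne_zero h, hn, hun.1⟩
    exact hno (i + (m0 : ZMod k)) ⟨m0, hm0pos, hm0lt, rfl⟩ humem
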